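/- Let n ≥ 1, σ an n×n real symmetric positive definite matrix, u > 0, p ∈ ℝⁿ with pᵀσ⁻¹p < u², and S an n×n real symmetric matrix. Set q := σ⁻¹p, v := √(1 − u⁻²pᵀσ⁻¹p), g := u²σ − ppᵀ, h := −v⁻¹( (2/u) p pᵀ − S − u σ ), Φ := S/u − (p pᵀ)/u², and Σ̃ := σ⁻¹ + (q qᵀ)/(u² v²). Then the mean curvature of the spacelike graph satisfies H := tr(g⁻¹ h) = (1/(u v)) ( n + tr(Σ̃ Φ) ). In particular, if p = 0 and S = 0 (the radial graph of a constant function u ≡ R₀ > 0, i.e. a piece of the hyperbolic plane ℋⁿ(R₀)), then H = n/u = n/R₀. -/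

import Mathlib

open Matrix

variable {n : ℕ}

private lemma trace_mul_vmv (M : Matrix (Fin n) (Fin n) ℝ) (a b : Fin n → ℝ) :
    (M * vecMulVec a b).trace = b ⬝ᵥ (M *ᵥ a) := by
  simp only [Matrix.trace, Matrix.diag, Matrix.mul_apply, vecMulVec_apply,
    dotProduct, Matrix.mulVec, Finset.mul_sum]
  exact Finset.sum_congr rfl fun k _ => Finset.sum_congr rfl fun i _ => by ring

private lemma trace_vmv_mul (M : Matrix (Fin n) (Fin n) ℝ) (a b : Fin n → ℝ) :
    (vecMulVec a b * M).trace = b ⬝ᵥ (M *ᵥ a) := by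
  simp only [Matrix.trace, Matrix.diag, Matrix.mul_apply, vecMulVec_apply,
    dotProduct, Matrix.mulVec, Finset.mul_sum]
  rw [Finset.sum_comm]
  exact Finset.sum_congr rfl fun k _ => Finset.sum_congr rfl fun i _ => by ring

private lemma trace_vmv (a b : Fin n → ℝ) : (vecMulVec a b).trace = a ⬝ᵥ b := by
  simp [Matrix.trace, Matrix.diag, vecMulVec_apply, dotProduct]

private lemma vmv_mulVec (a b x : Fin n → ℝ) :
    vecMulVec a b *ᵥ x = (b ⬝ᵥ x) • a := by
  ext i
  simp only [Matrix.mulVec, dotProduct, vecMulVec_apply, Pi.smul_apply, smul_eq_mul,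
    Finset.sum_mul]
  exact Finset.sum_congr rfl fun k _ => by ring

private lemma smul_vmv (s : ℝ) (a b : Fin n → ℝ) :
    vecMulVec (s • a) b = s • vecMulVec a b := by
  ext i j
  simp [vecMulVec_apply, mul_assoc]

private lemma mul_vmv (M : Matrix (Fin n) (Fin n) ℝ) (a b : Fin n → ℝ) :
    M * vecMulVec a b = vecMulVec (M *ᵥ a) b := by
  ext i j
  simp only [Matrix.mul_apply, vecMulVec_apply, Matrix.mulVec, dotProduct, Finset.sum_mul]
  congr 1; ext k; ring

private lemma vmv_mul (M : Matrix (Fin n) (Fin n) ℝ) (a b : Fin n → ℝ) :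
    vecMulVec a b * M = vecMulVec a (Mᵀ *ᵥ b) := by
  ext i j
  simp only [Matrix.mul_apply, vecMulVec_apply, Matrix.mulVec, dotProduct,
    Matrix.transpose_apply, Finset.mul_sum]
  congr 1; ext k; ring

private lemma vmv_vmv (a b c d : Fin n → ℝ) :
    vecMulVec a b * vecMulVec c d = (b ⬝ᵥ c) • vecMulVec a d := by
  ext i j
  simp only [Matrix.mul_apply, vecMulVec_apply, dotProduct, Matrix.smul_apply,
    Finset.sum_mul, smul_eq_mul]
  exact Finset.sum_congr rfl fun k _ => by ring


/-- The mean curvature `H = tr(g⁻¹h)` of a spacelike radial graph over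
`ℋⁿ(1) ⊂ ℝ^{n+1}_1` satisfies `H = (1/(uv)) (n + tr(Σ̃ Φ))`; in particular, for the
radial graph of a constant function (`p = 0`, `S = 0`), i.e. a piece of `ℋⁿ(R₀)`
with `u ≡ R₀`, one has `H = n/u`. -/
theorem mean_curvature_formula (n : ℕ) (hn : 1 ≤ n)
    (σ : Matrix (Fin n) (Fin n) ℝ) (hσ : σ.PosDef)
    (u : ℝ) (hu : 0 < u) (p : Fin n → ℝ) (hp : p ⬝ᵥ (σ⁻¹ *ᵥ p) < u ^ 2)
    (S : Matrix (Fin n) (Fin n) ℝ) (hS : S.IsSymm)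
    (q : Fin n → ℝ) (hq : q = σ⁻¹ *ᵥ p)
    (v : ℝ) (hv : v = Real.sqrt (1 - (u ^ 2)⁻¹ * (p ⬝ᵥ (σ⁻¹ *ᵥ p))))
    (g : Matrix (Fin n) (Fin n) ℝ) (hg : g = u ^ 2 • σ - Matrix.vecMulVec p p)
    (h : Matrix (Fin n) (Fin n) ℝ)
    (hh : h = (-v⁻¹) • ((2 / u) • Matrix.vecMulVec p p - S - u • σ))
    (Φ : Matrix (Fin n) (Fin n) ℝ) (hΦ : Φ = u⁻¹ • S - (u ^ 2)⁻¹ • Matrix.vecMulVec p p)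
    (Sig : Matrix (Fin n) (Fin n) ℝ)
    (hSig : Sig = σ⁻¹ + (u ^ 2 * v ^ 2)⁻¹ • Matrix.vecMulVec q q)
    (H : ℝ) (hH : H = (g⁻¹ * h).trace) :
    H = (u * v)⁻¹ * ((n : ℝ) + (Sig * Φ).trace) ∧
    (p = 0 → S = 0 → H = n / u) := by
  set t : ℝ := p ⬝ᵥ (σ⁻¹ *ᵥ p) with ht
  -- basic scalar facts
  have hσdet : IsUnit σ.det := hσ.det_pos.ne'.isUnit
  have ht0 : 0 ≤ t := by
    have := (hσ.inv.posSemidef).dotProduct_mulVec_nonneg p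
    simpa using this
  have hu0 : (u : ℝ) ≠ 0 := hu.ne'
  have htu : t < u ^ 2 := hp
  have hut0 : (0:ℝ) < u ^ 2 - t := by linarith
  have hv2 : v ^ 2 = 1 - (u ^ 2)⁻¹ * t := by
    rw [hv, Real.sq_sqrt]
    have : (u^2)⁻¹ * t < 1 := by
      rw [inv_mul_lt_iff₀ (by positivity)]
      simpa using htu
    linarith
  have hvpos : 0 < v := by
    rw [hv]
    apply Real.sqrt_pos.2
    have : (u^2)⁻¹ * t < 1 := by
      rw [inv_mul_lt_iff₀ (by positivity)]
      simpa using htu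
    linarith
  have hv0 : v ≠ 0 := hvpos.ne'
  have hu2v2 : u ^ 2 * v ^ 2 = u ^ 2 - t := by
    rw [hv2]; field_simp
  -- matrix facts
  have hσσ : σ * σ⁻¹ = 1 := mul_nonsing_inv σ hσdet
  have hσ'σ : σ⁻¹ * σ = 1 := nonsing_inv_mul σ hσdet
  have hσq : σ *ᵥ q = p := by
    rw [hq, Matrix.mulVec_mulVec, hσσ, Matrix.one_mulVec]
  have hsymm : σ⁻¹ᵀ = σ⁻¹ := by
    have := hσ.inv.isHermitian
    rwa [Matrix.IsHermitian, conjTranspose_eq_transpose_of_trivial] at this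
  have hσ'p : σ⁻¹ᵀ *ᵥ p = q := by rw [hsymm, hq]
  have hpq : p ⬝ᵥ q = t := by rw [hq]
  have hqp : q ⬝ᵥ p = t := by rw [dotProduct_comm, hpq]
  have hqσq : q ⬝ᵥ (σ *ᵥ q) = t := by rw [hσq, hqp]
  set c : ℝ := (u ^ 2 * v ^ 2)⁻¹ with hc
  have hcval : c = (u ^ 2 - t)⁻¹ := by rw [hc, hu2v2]
  -- the inverse of g
  have hginv : g⁻¹ = (u ^ 2 : ℝ)⁻¹ • Sig := by
    apply inv_eq_right_inv
    rw [hg, hSig]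
    simp only [smul_add, Matrix.sub_mul, Matrix.mul_add, Matrix.smul_mul,
      Matrix.mul_smul, mul_vmv, vmv_mul, vmv_vmv, smul_smul, smul_eq_mul,
      hσq, hσ'p, hpq, hσσ, vmv_mulVec, smul_vmv]
    rw [hcval]
    match_scalars
    · field_simp
    · field_simp
      ring
  -- trace computations
  have htrP : (Sig * vecMulVec p p).trace = t + c * t ^ 2 := by
    rw [hSig, Matrix.add_mul, Matrix.smul_mul, trace_add, trace_smul,
      trace_mul_vmv, vmv_vmv, trace_smul, trace_vmv, hqp]
    simp only [smul_eq_mul, ← ht]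
    ring
  have htrσ : (Sig * σ).trace = (n : ℝ) + c * t := by
    rw [hSig, Matrix.add_mul, Matrix.smul_mul, trace_add, trace_smul, hσ'σ,
      trace_one, trace_vmv_mul, hqσq]
    simp
  set A : ℝ := (Sig * S).trace with hA
  have htrΦ : (Sig * Φ).trace = u⁻¹ * A - (u ^ 2)⁻¹ * (t + c * t ^ 2) := by
    rw [hΦ, Matrix.mul_sub, Matrix.mul_smul, Matrix.mul_smul, trace_sub,
      trace_smul, trace_smul, htrP, hA, smul_eq_mul, smul_eq_mul]
  have hHval : H = (u^2)⁻¹ * (-v⁻¹) * ((2/u)*(t + c*t^2) - A - u*((n:ℝ) + c*t)) := by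
    rw [hH, hginv, hh, Matrix.smul_mul, Matrix.mul_smul, trace_smul, trace_smul,
      Matrix.mul_sub, Matrix.mul_sub, Matrix.mul_smul, Matrix.mul_smul, trace_sub,
      trace_sub, trace_smul, trace_smul, htrP, htrσ, ← hA, smul_eq_mul, smul_eq_mul,
      smul_eq_mul, smul_eq_mul]
    ring
  have main : H = (u * v)⁻¹ * ((n : ℝ) + (Sig * Φ).trace) := by
    rw [hHval, htrΦ, hcval]
    field_simp
    ring
  refine ⟨main, fun hp0 hS0 => ?_⟩
  have ht00 : t = 0 := by rw [ht, hp0]; simp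
  have hv1 : v = 1 := by rw [hv, ht00]; simp
  have hA0 : A = 0 := by rw [hA, hS0, Matrix.mul_zero, trace_zero]
  rw [main, htrΦ, hA0, ht00, hv1]
  field_simp
  ring
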